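/- For the operator ∇_q(b)(n) := Σ_{i=0}^{n} q^i ((q^{-n})_i/(q)_i) b(i) acting on sequences b : ℕ → Q(q), and the difference operators Δ_t(b)(n) := b(n) - t·b(n+1), one has ∇_q(b)(n) = (Δ_{q^{-(n-1)}} ∘ ⋯ ∘ Δ_{q^{-1}} ∘ Δ_1 (b))(0) for every n ≥ 0 (the composition of n difference operators with parameters 1, q^{-1}, …, q^{-(n-1)}, applied in that order, evaluated at 0; for n = 0 the empty composition gives b(0)). -/

import Mathlib

/-- The q-shifted factorial `(x)_i = ∏_{j=0}^{i-1} (1 - x q^j)`. -/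
def qpoch {F : Type*} [Field F] (q x : F) (n : ℕ) : F :=
  ∏ j ∈ Finset.range n, (1 - x * q ^ j)

/-- `∇_q(b)(n) = Σ_{i=0}^{n} q^i ((q^{-n})_i/(q)_i) b(i)`. -/
def nablaq {F : Type*} [Field F] (q : F) (b : ℕ → F) (n : ℕ) : F :=
  ∑ i ∈ Finset.range (n + 1), q ^ i * qpoch q ((q ^ n)⁻¹) i / qpoch q q i * b i

/-- The difference operator `Δ_t(b)(n) = b(n) - t b(n+1)`. -/
def Delta {F : Type*} [Field F] (t : F) (b : ℕ → F) : ℕ → F :=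
  fun n => b n - t * b (n + 1)

/-- The iterated composition `Δ_{q^{-(n-1)}} ∘ ⋯ ∘ Δ_{q^{-1}} ∘ Δ_1` applied to `b`
(`Δ_1` first); for `n = 0` it is `b`. -/
def Diter {F : Type*} [Field F] (q : F) (b : ℕ → F) : ℕ → (ℕ → F)
  | 0 => b
  | k + 1 => Delta ((q ^ k)⁻¹) (Diter q b k)

section Aux
variable {F : Type*} [Field F]

lemma qpoch_succ (q x : F) (i : ℕ) :
    qpoch q x (i + 1) = qpoch q x i * (1 - x * q ^ i) :=
  Finset.prod_range_succ _ _

lemma qpoch_q_ne_zero (q : F) (hq1 : ∀ n : ℕ, 1 ≤ n → q ^ n ≠ 1) (i : ℕ) :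
    qpoch q q i ≠ 0 := by
  induction i with
  | zero => simp [qpoch]
  | succ k ih =>
    rw [qpoch_succ]
    refine mul_ne_zero ih (sub_ne_zero.mpr fun h => hq1 (k + 1) (by omega) ?_)
    rw [pow_succ']; exact h.symm

lemma qpoch_inv_shift (q : F) (hq : q ≠ 0) (n i : ℕ) :
    qpoch q ((q ^ (n + 1))⁻¹) (i + 1)
      = (1 - (q ^ (n + 1))⁻¹) * qpoch q ((q ^ n)⁻¹) i := by
  rw [qpoch, Finset.prod_range_succ', qpoch]
  have h : ∀ j : ℕ, (1 - (q ^ (n + 1))⁻¹ * q ^ (j + 1)) = (1 - (q ^ n)⁻¹ * q ^ j) := by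
    intro j
    congr 1
    rw [pow_succ, pow_succ, mul_inv]
    field_simp
  simp only [h, pow_zero, mul_one]
  rw [mul_comm]

lemma qpoch_inv_self (q : F) (hq : q ≠ 0) (n : ℕ) :
    qpoch q ((q ^ n)⁻¹) (n + 1) = 0 := by
  apply Finset.prod_eq_zero (Finset.self_mem_range_succ n)
  rw [inv_mul_cancel₀ (pow_ne_zero n hq), sub_self]

lemma coeff_rec (q : F) (hq : q ≠ 0) (hq1 : ∀ n : ℕ, 1 ≤ n → q ^ n ≠ 1) (n i : ℕ) :
    q ^ (i + 1) * qpoch q ((q ^ (n + 1))⁻¹) (i + 1) / qpoch q q (i + 1)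
      = q ^ (i + 1) * qpoch q ((q ^ n)⁻¹) (i + 1) / qpoch q q (i + 1)
        - (q ^ n)⁻¹ * (q ^ i * qpoch q ((q ^ n)⁻¹) i / qpoch q q i) := by
  have hQ : qpoch q q i ≠ 0 := qpoch_q_ne_zero q hq1 i
  have hfac : (1 : F) - q * q ^ i ≠ 0 := by
    refine sub_ne_zero.mpr fun h => hq1 (i + 1) (by omega) ?_
    rw [pow_succ']; exact h.symm
  have hqn : (q : F) ^ n ≠ 0 := pow_ne_zero n hq
  have hqn1 : (q : F) ^ (n + 1) ≠ 0 := pow_ne_zero _ hq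
  rw [qpoch_inv_shift q hq, qpoch_succ q ((q ^ n)⁻¹), qpoch_succ q q]
  field_simp
  ring

lemma Diter_shift (q : F) (b : ℕ → F) (n m : ℕ) :
    Diter q b n (m + 1) = Diter q (fun j => b (j + 1)) n m := by
  induction n generalizing m with
  | zero => rfl
  | succ k ih => simp only [Diter, Delta, ih]

end Aux

theorem stmt_19 {F : Type*} [Field F] (q : F) (hq : q ≠ 0)
    (hq1 : ∀ n : ℕ, 1 ≤ n → q ^ n ≠ 1) (b : ℕ → F) (n : ℕ) :
    nablaq q b n = Diter q b n 0 := by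
  induction n generalizing b with
  | zero => simp [nablaq, qpoch, Diter]
  | succ n ih =>
    have hrhs : Diter q b (n + 1) 0
        = nablaq q b n - (q ^ n)⁻¹ * nablaq q (fun j => b (j + 1)) n := by
      simp only [Diter, Delta, zero_add, Diter_shift q b n 0, ih]
    rw [hrhs, nablaq, Finset.sum_range_succ']
    have h0 : ∀ m : ℕ, q ^ 0 * qpoch q ((q ^ m)⁻¹) 0 / qpoch q q 0 * b 0 = b 0 := by
      intro m; simp [qpoch]
    rw [h0]
    have hterm : ∀ i ∈ Finset.range (n + 1),
        q ^ (i + 1) * qpoch q ((q ^ (n + 1))⁻¹) (i + 1) / qpoch q q (i + 1) * b (i + 1)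
          = q ^ (i + 1) * qpoch q ((q ^ n)⁻¹) (i + 1) / qpoch q q (i + 1) * b (i + 1)
            - (q ^ n)⁻¹ * (q ^ i * qpoch q ((q ^ n)⁻¹) i / qpoch q q i * b (i + 1)) := by
      intro i _
      rw [coeff_rec q hq hq1 n i]; ring
    rw [Finset.sum_congr rfl hterm, Finset.sum_sub_distrib, ← Finset.mul_sum]
    have hA : ∑ i ∈ Finset.range (n + 1),
        q ^ (i + 1) * qpoch q ((q ^ n)⁻¹) (i + 1) / qpoch q q (i + 1) * b (i + 1) + b 0
          = nablaq q b n := by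
      have hz : q ^ (n + 1) * qpoch q ((q ^ n)⁻¹) (n + 1) / qpoch q q (n + 1) * b (n + 1)
          = 0 := by
        rw [qpoch_inv_self q hq n]; simp
      calc ∑ i ∈ Finset.range (n + 1),
            q ^ (i + 1) * qpoch q ((q ^ n)⁻¹) (i + 1) / qpoch q q (i + 1) * b (i + 1) + b 0
          = ∑ i ∈ Finset.range (n + 2),
            q ^ i * qpoch q ((q ^ n)⁻¹) i / qpoch q q i * b i := by
            rw [Finset.sum_range_succ'
              (fun i => q ^ i * qpoch q ((q ^ n)⁻¹) i / qpoch q q i * b i) (n + 1)]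
            congr 1
            simp [qpoch]
        _ = nablaq q b n := by
            rw [Finset.sum_range_succ, hz, add_zero, nablaq]
    have hB : ∑ i ∈ Finset.range (n + 1),
        q ^ i * qpoch q ((q ^ n)⁻¹) i / qpoch q q i * b (i + 1)
          = nablaq q (fun j => b (j + 1)) n := rfl
    rw [hB]
    linear_combination hA
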